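/- Let s ∈ (0,1), p' ∈ (1,∞), and g : ℝ^n → ℝ locally integrable. Then for every x ∈ ℝ^n and t > 0, (∫_{ℝ^n \ B(x,2t)} |g(z) − (g)_{B(x,t)}|^{p'} / |z−x|^{n+sp'} dz)^{1/p'} ≤ C (∫_{ℝ^n} |g(z) − g(x)|^{p'} / |z−x|^{n+sp'} dz)^{1/p'}, with C depending only on n, s, p'. -/

import Mathlib

open MeasureTheory ENNReal Metric

private lemma rpow_alg10 (k n : ℕ) {a t : ℝ} (ht : 0 < t) :
    ((2:ℝ)^(k+1) * t) ^ (-a) * ((2:ℝ)^(k+2) * t) ^ (n:ℝ)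
      = (2:ℝ)^(n:ℝ) * ((2:ℝ) ^ (-(a - (n:ℝ))))^(k+1) * t ^ ((n:ℝ) - a) := by
  have h2 : (0:ℝ) < 2 := two_pos
  rw [Real.mul_rpow (by positivity) ht.le, Real.mul_rpow (by positivity) ht.le,
    ← Real.rpow_natCast (2:ℝ) (k+1), ← Real.rpow_natCast (2:ℝ) (k+2),
    ← Real.rpow_natCast ((2:ℝ) ^ (-(a - (n:ℝ)))) (k+1),
    ← Real.rpow_mul h2.le, ← Real.rpow_mul h2.le, ← Real.rpow_mul h2.le]
  calc (2:ℝ) ^ ((↑(k+1):ℝ) * (-a)) * t ^ (-a) * ((2:ℝ) ^ ((↑(k+2):ℝ) * (n:ℝ)) * t ^ (n:ℝ))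
      = ((2:ℝ) ^ ((↑(k+1):ℝ) * (-a)) * (2:ℝ) ^ ((↑(k+2):ℝ) * (n:ℝ))) * (t ^ (-a) * t ^ (n:ℝ)) := by
        ring
    _ = (2:ℝ) ^ ((↑(k+1):ℝ) * (-a) + (↑(k+2):ℝ) * (n:ℝ)) * t ^ (-a + (n:ℝ)) := by
        rw [← Real.rpow_add h2, ← Real.rpow_add ht]
    _ = (2:ℝ) ^ ((n:ℝ) + -(a - (n:ℝ)) * (↑(k+1):ℝ)) * t ^ ((n:ℝ) - a) := by
        congr 1
        · congr 1; push_cast; ring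
        · congr 1; ring
    _ = _ := by rw [Real.rpow_add h2]

private lemma tail_bound10 {n : ℕ} (hn0 : n ≠ 0) {a t : ℝ} (hna : (n:ℝ) < a) (ht : 0 < t)
    (x : EuclideanSpace ℝ (Fin n)) :
    ∫⁻ z in (ball x (2*t))ᶜ, ENNReal.ofReal (‖z - x‖ ^ (-a)) ≤
      volume (ball (0:EuclideanSpace ℝ (Fin n)) 1) * ENNReal.ofReal ((2:ℝ) ^ (n:ℝ)) *
      (1 - ENNReal.ofReal ((2:ℝ) ^ (-(a - (n:ℝ)))))⁻¹ * ENNReal.ofReal (t ^ ((n:ℝ) - a)) := by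
  haveI : Nonempty (Fin n) := ⟨⟨0, Nat.pos_of_ne_zero hn0⟩⟩
  set V := volume (ball (0:EuclideanSpace ℝ (Fin n)) 1) with hV
  set q : ℝ := (2:ℝ) ^ (-(a - (n:ℝ))) with hq
  have hq0 : 0 ≤ q := by positivity
  have hq1 : q ≤ 1 := Real.rpow_le_one_of_one_le_of_nonpos one_le_two (by linarith)
  set A : ℕ → Set (EuclideanSpace ℝ (Fin n)) :=
    fun k => ball x ((2:ℝ)^(k+2) * t) \ ball x ((2:ℝ)^(k+1) * t) with hA
  have hcover : (ball x (2*t))ᶜ ⊆ ⋃ k, A k := by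
    intro z hz
    simp only [Set.mem_compl_iff, mem_ball, not_lt] at hz
    have hdist : 2 * t ≤ dist z x := hz
    have hd0 : (1:ℝ) ≤ dist z x / (2 * t) := (one_le_div (by linarith)).2 hdist
    set m : ℕ := ⌊dist z x / (2 * t)⌋₊ with hm
    have hm1 : 1 ≤ m := Nat.one_le_iff_ne_zero.2 (by
      simp only [hm, ne_eq, Nat.floor_eq_zero, not_lt]; exact hd0)
    set k : ℕ := Nat.log 2 m with hk
    have h1 : (2:ℝ)^k ≤ dist z x / (2 * t) := by
      calc ((2:ℝ)^k) = ((2^k : ℕ) : ℝ) := by push_cast; ring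
        _ ≤ (m : ℝ) := by exact_mod_cast Nat.pow_log_le_self 2 (by omega)
        _ ≤ _ := Nat.floor_le (by linarith)
    have h2 : dist z x / (2 * t) < (2:ℝ)^(k+1) := by
      calc dist z x / (2 * t) < (m:ℝ) + 1 := Nat.lt_floor_add_one _
        _ ≤ ((2^(k+1) : ℕ) : ℝ) := by
            exact_mod_cast Nat.succ_le_of_lt (Nat.lt_pow_succ_log_self one_lt_two m)
        _ = (2:ℝ)^(k+1) := by push_cast; ring
    refine Set.mem_iUnion.2 ⟨k, ?_, ?_⟩
    · have := (div_lt_iff₀ (by linarith : (0:ℝ) < 2 * t)).1 h2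
      simp only [mem_ball]
      calc dist z x < 2^(k+1) * (2 * t) := this
        _ = 2^(k+2) * t := by ring
    · simp only [mem_ball, not_lt]
      have := (le_div_iff₀ (by linarith : (0:ℝ) < 2 * t)).1 h1
      calc (2:ℝ)^(k+1) * t = 2^k * (2*t) := by ring
        _ ≤ dist z x := this
  have hrad : ∀ k : ℕ, (0:ℝ) < (2:ℝ)^(k+1) * t := fun k => by positivity
  calc ∫⁻ z in (ball x (2*t))ᶜ, ENNReal.ofReal (‖z - x‖ ^ (-a))
      ≤ ∫⁻ z in ⋃ k, A k, ENNReal.ofReal (‖z - x‖ ^ (-a)) := lintegral_mono_set hcover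
    _ ≤ ∑' k, ∫⁻ z in A k, ENNReal.ofReal (‖z - x‖ ^ (-a)) := lintegral_iUnion_le _ _
    _ ≤ ∑' k, ENNReal.ofReal (((2:ℝ)^(k+1) * t) ^ (-a)) * volume (A k) := by
        refine ENNReal.tsum_le_tsum fun k => ?_
        rw [← setLIntegral_const]
        refine setLIntegral_mono' (measurableSet_ball.diff measurableSet_ball) fun z hz => ?_
        refine ENNReal.ofReal_le_ofReal ?_
        refine Real.rpow_le_rpow_of_nonpos (hrad k) ?_ (by linarith)
        have : ¬ dist z x < (2:ℝ)^(k+1) * t := hz.2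
        rw [dist_eq_norm] at this
        linarith [not_lt.1 this]
    _ ≤ ∑' k, ENNReal.ofReal (((2:ℝ)^(k+1) * t) ^ (-a)) *
          (ENNReal.ofReal (((2:ℝ)^(k+2) * t) ^ (n:ℝ)) * V) := by
        refine ENNReal.tsum_le_tsum fun k => ?_
        refine mul_le_mul_right ?_ _
        have : volume (A k) ≤ volume (ball x ((2:ℝ)^(k+2) * t)) :=
          measure_mono Set.diff_subset
        rw [Measure.addHaar_ball volume x (by positivity)] at this
        rw [finrank_euclideanSpace_fin, ← Real.rpow_natCast _ n] at this
        exact this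
    _ = ∑' (k : ℕ), (ENNReal.ofReal ((2:ℝ)^(n:ℝ) * t ^ ((n:ℝ) - a)) * V) * ENNReal.ofReal q ^ (k+1) := by
        refine tsum_congr fun k => ?_
        rw [← mul_assoc, ← ENNReal.ofReal_mul (by positivity), rpow_alg10 k n ht,
          ← ENNReal.ofReal_pow hq0]
        rw [show (2:ℝ)^(n:ℝ) * q^(k+1) * t^((n:ℝ)-a) = ((2:ℝ)^(n:ℝ) * t^((n:ℝ)-a)) * q^(k+1) by ring,
          ENNReal.ofReal_mul (by positivity)]
        ring
    _ ≤ ∑' (k : ℕ), (ENNReal.ofReal ((2:ℝ)^(n:ℝ) * t ^ ((n:ℝ) - a)) * V) * ENNReal.ofReal q ^ k := by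
        refine ENNReal.tsum_le_tsum fun k => ?_
        refine mul_le_mul_right ?_ _
        exact pow_le_pow_of_le_one zero_le (ENNReal.ofReal_le_one.2 hq1) (Nat.le_succ k)
    _ = (ENNReal.ofReal ((2:ℝ)^(n:ℝ) * t ^ ((n:ℝ) - a)) * V) * (1 - ENNReal.ofReal q)⁻¹ := by
        rw [ENNReal.tsum_mul_left, ENNReal.tsum_geometric]
    _ = V * ENNReal.ofReal ((2:ℝ) ^ (n:ℝ)) * (1 - ENNReal.ofReal q)⁻¹
          * ENNReal.ofReal (t ^ ((n:ℝ) - a)) := by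
        rw [ENNReal.ofReal_mul (by positivity)]
        ring

private lemma avg_bound10 {n : ℕ} {p' : ℝ} (hp' : 1 < p')
    {g : EuclideanSpace ℝ (Fin n) → ℝ} (hg : LocallyIntegrable g volume)
    (x : EuclideanSpace ℝ (Fin n)) {t : ℝ} (ht : 0 < t) :
    ENNReal.ofReal (|g x - ⨍ w in ball x t, g w| ^ p')
      ≤ (volume (ball x t))⁻¹ *
        ∫⁻ w in ball x t, ENNReal.ofReal (|g w - g x| ^ p') := by
  set B := ball x t with hB
  set m := volume B with hm
  have hm0 : m ≠ 0 := (measure_ball_pos volume x ht).ne'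
  have hmtop : m ≠ ⊤ := measure_ball_lt_top.ne
  have hmr : 0 < m.toReal := ENNReal.toReal_pos hm0 hmtop
  have hgB : IntegrableOn g B volume :=
    (hg.integrableOn_isCompact (isCompact_closedBall x t)).mono_set ball_subset_closedBall
  have hsub : IntegrableOn (fun w => |g w - g x|) B volume :=
    (hgB.sub (integrableOn_const measure_ball_lt_top.ne)).abs
  have hp'0 : (0:ℝ) ≤ p' := by linarith
  have h1 : |g x - ⨍ w in B, g w| ≤ (m.toReal)⁻¹ * ∫ w in B, |g w - g x| := by
    rw [setAverage_eq, measureReal_def]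
    have : g x - (m.toReal)⁻¹ • ∫ w in B, g w
        = (m.toReal)⁻¹ * ∫ w in B, (g x - g w) := by
      rw [integral_sub (integrableOn_const (C := g x) measure_ball_lt_top.ne) hgB,
        setIntegral_const, smul_eq_mul, smul_eq_mul]
      field_simp
      rw [hm, hB, measureReal_def]
    rw [this, abs_mul, abs_of_nonneg (by positivity : (0:ℝ) ≤ (m.toReal)⁻¹)]
    refine mul_le_mul_of_nonneg_left ?_ (by positivity)
    calc |∫ w in B, (g x - g w)| ≤ ∫ w in B, |g x - g w| := by
          simpa [Real.norm_eq_abs] using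
            norm_integral_le_integral_norm (μ := volume.restrict B) (fun w => g x - g w)
      _ = ∫ w in B, |g w - g x| := by simp_rw [abs_sub_comm]
  have h2 : ENNReal.ofReal |g x - ⨍ w in B, g w|
      ≤ m⁻¹ * ∫⁻ w in B, ENNReal.ofReal (|g w - g x|) := by
    calc ENNReal.ofReal |g x - ⨍ w in B, g w|
        ≤ ENNReal.ofReal ((m.toReal)⁻¹ * ∫ w in B, |g w - g x|) := ENNReal.ofReal_le_ofReal h1
      _ = ENNReal.ofReal ((m.toReal)⁻¹) * ENNReal.ofReal (∫ w in B, |g w - g x|) :=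
          ENNReal.ofReal_mul (by positivity)
      _ = m⁻¹ * ∫⁻ w in B, ENNReal.ofReal (|g w - g x|) := by
          rw [ENNReal.ofReal_inv_of_pos hmr, ENNReal.ofReal_toReal hmtop,
            ofReal_integral_eq_lintegral_ofReal hsub
              (Filter.Eventually.of_forall fun w => abs_nonneg _)]
  set h : EuclideanSpace ℝ (Fin n) → ℝ≥0∞ := fun w => ENNReal.ofReal (|g w - g x|) with hh
  have hmeas : AEMeasurable h (volume.restrict B) := by
    refine ENNReal.measurable_ofReal.comp_aemeasurable ?_
    exact measurable_abs.comp_aemeasurable ((hg.aestronglyMeasurable.aemeasurable.restrict).sub aemeasurable_const)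
  set q : ℝ := p' / (p' - 1) with hq
  have hpq : p'.HolderConjugate q := (Real.holderConjugate_iff_eq_conjExponent hp').2 rfl
  have holder : ∫⁻ w in B, h w
      ≤ (∫⁻ w in B, h w ^ p') ^ (1/p') * m ^ (1/q) := by
    have := ENNReal.lintegral_mul_le_Lp_mul_Lq (volume.restrict B) hpq hmeas
      (aemeasurable_const (b := (1:ℝ≥0∞)))
    simpa [hpq.symm.lt.ne', ENNReal.one_rpow, Measure.restrict_apply_univ] using this
  have hfin : ENNReal.ofReal |g x - ⨍ w in B, g w| ^ p'
      ≤ (m⁻¹ * ((∫⁻ w in B, h w ^ p') ^ (1/p') * m ^ (1/q))) ^ p' :=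
    ENNReal.rpow_le_rpow (h2.trans (mul_le_mul_right holder _)) hp'0
  rw [← ENNReal.ofReal_rpow_of_nonneg (abs_nonneg _) hp'0]
  have hexp : (1/p') * p' = 1 := by field_simp
  have hqexp : (1/q) * p' = p' - 1 := by
    rw [hq]; field_simp
  calc ENNReal.ofReal |g x - ⨍ w in B, g w| ^ p'
      ≤ (m⁻¹ * ((∫⁻ w in B, h w ^ p') ^ (1/p') * m ^ (1/q))) ^ p' := hfin
    _ = (m⁻¹) ^ p' * ((∫⁻ w in B, h w ^ p') ^ ((1/p') * p') * m ^ ((1/q) * p')) := by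
        rw [ENNReal.mul_rpow_of_nonneg _ _ hp'0, ENNReal.mul_rpow_of_nonneg _ _ hp'0,
          ← ENNReal.rpow_mul, ← ENNReal.rpow_mul]
    _ = m⁻¹ * ∫⁻ w in B, h w ^ p' := by
        rw [hexp, hqexp, ENNReal.rpow_one, ENNReal.inv_rpow]
        rw [show (m ^ p')⁻¹ = m ^ (-p') by rw [ENNReal.rpow_neg]]
        rw [mul_comm ((∫⁻ w in B, h w ^ p')) (m ^ (p'-1)), ← mul_assoc,
          ← ENNReal.rpow_add _ _ hm0 hmtop]
        rw [show -p' + (p'-1) = -1 by ring, ENNReal.rpow_neg_one]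
    _ = (volume B)⁻¹ * ∫⁻ w in B, ENNReal.ofReal (|g w - g x| ^ p') := by
        congr 1
        refine lintegral_congr fun w => ?_
        rw [hh, ENNReal.ofReal_rpow_of_nonneg (abs_nonneg _) hp'0]

/-- There is `C = C(n,s,p')` such that for locally integrable `g`, all `x` and
`t > 0`,
`(∫_{ℝⁿ∖B(x,2t)} |g(z) − (g)_{B(x,t)}|^{p'}/|z−x|^{n+sp'} dz)^{1/p'}
   ≤ C (∫_{ℝⁿ} |g(z) − g(x)|^{p'}/|z−x|^{n+sp'} dz)^{1/p'}`. -/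
theorem stmt_10 (n : ℕ) (s p' : ℝ) (hs : s ∈ Set.Ioo (0 : ℝ) 1) (hp' : 1 < p') :
    ∃ C : ℝ≥0∞, 0 < C ∧ C ≠ ∞ ∧
      ∀ g : EuclideanSpace ℝ (Fin n) → ℝ, LocallyIntegrable g volume →
      ∀ (x : EuclideanSpace ℝ (Fin n)) (t : ℝ), 0 < t →
        (∫⁻ z in (Metric.ball x (2 * t))ᶜ,
            ENNReal.ofReal (|g z - ⨍ w in Metric.ball x t, g w| ^ p'
              / ‖z - x‖ ^ ((n : ℝ) + s * p'))) ^ (1 / p')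
          ≤ C * (∫⁻ z, ENNReal.ofReal (|g z - g x| ^ p'
              / ‖z - x‖ ^ ((n : ℝ) + s * p'))) ^ (1 / p') := by
  obtain ⟨hs0, hs1⟩ := hs
  have hp'0 : (0:ℝ) < p' := by linarith
  have hsp' : 0 < s * p' := by positivity
  rcases eq_or_ne n 0 with hn | hn0
  · -- trivial case `n = 0`
    subst hn
    refine ⟨1, one_pos, one_ne_top, fun g hg x t ht => ?_⟩
    have hempty : (ball x (2*t))ᶜ = (∅ : Set (EuclideanSpace ℝ (Fin 0))) := by
      ext z
      have hzx : z = x := by ext i; exact i.elim0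
      simp only [Set.mem_compl_iff, mem_ball, not_lt, Set.mem_empty_iff_false, iff_false, not_le]
      rw [hzx, dist_self]; linarith
    rw [hempty, Measure.restrict_empty, lintegral_zero_measure,
      ENNReal.zero_rpow_of_pos (by positivity)]
    exact zero_le
  · -- main case
    set a : ℝ := (n:ℝ) + s * p' with ha
    have ha0 : (0:ℝ) ≤ a := by positivity
    have hna : (n:ℝ) < a := by simp only [ha]; linarith
    set V := volume (ball (0:EuclideanSpace ℝ (Fin n)) 1) with hV
    haveI : Nonempty (Fin n) := ⟨⟨0, Nat.pos_of_ne_zero hn0⟩⟩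
    have hV0 : V ≠ 0 := (measure_ball_pos volume 0 one_pos).ne'
    have hVtop : V ≠ ⊤ := measure_ball_lt_top.ne
    set D : ℝ≥0∞ := ENNReal.ofReal ((2:ℝ) ^ (n:ℝ)) *
      (1 - ENNReal.ofReal ((2:ℝ) ^ (-(s * p'))))⁻¹ with hD
    have hq1 : ENNReal.ofReal ((2:ℝ) ^ (-(s * p'))) < 1 :=
      ENNReal.ofReal_lt_one.2 (Real.rpow_lt_one_of_one_lt_of_neg one_lt_two (by linarith))
    have hDtop : D ≠ ⊤ := by
      refine ENNReal.mul_ne_top ENNReal.ofReal_ne_top ?_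
      rw [ENNReal.inv_ne_top]
      simp [tsub_eq_zero_iff_le, hq1.not_ge]
    set C₀ : ℝ≥0∞ := ENNReal.ofReal ((2:ℝ) ^ p') * (1 + D) with hC₀
    have hC₀0 : C₀ ≠ 0 := by
      refine mul_ne_zero ?_ ?_
      · simp only [ne_eq, ENNReal.ofReal_eq_zero, not_le]; positivity
      · exact (lt_of_lt_of_le one_pos le_self_add).ne'
    have hC₀top : C₀ ≠ ⊤ :=
      ENNReal.mul_ne_top ENNReal.ofReal_ne_top (ENNReal.add_ne_top.2 ⟨one_ne_top, hDtop⟩)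
    refine ⟨C₀ ^ (1/p'), ENNReal.rpow_pos (pos_iff_ne_zero.2 hC₀0) hC₀top, 
      ENNReal.rpow_ne_top_of_nonneg (by positivity) hC₀top, fun g hg x t ht => ?_⟩
    set B := ball x t with hB
    set m := volume B with hm
    have hm0 : m ≠ 0 := (measure_ball_pos volume x ht).ne'
    have hmtop : m ≠ ⊤ := measure_ball_lt_top.ne
    set A : ℝ := |g x - ⨍ w in B, g w| with hA
    set I : ℝ≥0∞ := ∫⁻ z, ENNReal.ofReal (|g z - g x| ^ p' / ‖z - x‖ ^ a) with hI
    set K : ℝ≥0∞ := ∫⁻ z in (ball x (2*t))ᶜ, ENNReal.ofReal (‖z - x‖ ^ (-a)) with hK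
    set et : ℝ≥0∞ := ENNReal.ofReal t with het
    have het0 : et ≠ 0 := by simp [het, ht, ht.le, not_le, ht.ne']
    have hettop : et ≠ ⊤ := ENNReal.ofReal_ne_top
    have hofReal_t : ∀ y : ℝ, ENNReal.ofReal (t ^ y) = et ^ y := fun y =>
      (ENNReal.ofReal_rpow_of_pos ht).symm
    -- pointwise splitting on the complement
    have hpt : ∀ z ∈ (ball x (2*t))ᶜ,
        ENNReal.ofReal (|g z - ⨍ w in B, g w| ^ p' / ‖z - x‖ ^ a)
          ≤ ENNReal.ofReal ((2:ℝ)^p') * ENNReal.ofReal (|g z - g x| ^ p' / ‖z - x‖ ^ a)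
            + (ENNReal.ofReal ((2:ℝ)^p') * ENNReal.ofReal (A ^ p')) *
              ENNReal.ofReal (‖z - x‖ ^ (-a)) := by
      intro z hz
      simp only [Set.mem_compl_iff, mem_ball, not_lt] at hz
      have hw : (0:ℝ) < ‖z - x‖ := by rw [← dist_eq_norm]; linarith
      have hwa : (0:ℝ) < ‖z - x‖ ^ a := Real.rpow_pos_of_pos hw a
      set u : ℝ := |g z - g x| ^ p' with hu
      have hu0 : 0 ≤ u := Real.rpow_nonneg (abs_nonneg _) _
      have hv0 : 0 ≤ A ^ p' := Real.rpow_nonneg (abs_nonneg _) _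
      have r2 : |g z - ⨍ w in B, g w| ^ p' ≤ (2:ℝ)^p' * (u + A ^ p') := by
        have r1 : |g z - ⨍ w in B, g w| ≤ |g z - g x| + A := abs_sub_le _ _ _
        have rmax : |g z - g x| + A ≤ 2 * max (|g z - g x|) A := by
          rcases le_total (|g z - g x|) A with h | h
          · rw [max_eq_right h]; linarith
          · rw [max_eq_left h]; linarith
        calc |g z - ⨍ w in B, g w| ^ p' ≤ (2 * max (|g z - g x|) A) ^ p' :=
              Real.rpow_le_rpow (abs_nonneg _) (r1.trans rmax) (by linarith)
          _ = (2:ℝ)^p' * (max (|g z - g x|) A) ^ p' :=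
              Real.mul_rpow (by norm_num) (le_max_of_le_left (abs_nonneg _))
          _ ≤ (2:ℝ)^p' * (u + A ^ p') := by
              refine mul_le_mul_of_nonneg_left ?_ (by positivity)
              rcases le_total (|g z - g x|) A with h | h
              · rw [max_eq_right h]; linarith
              · rw [max_eq_left h]; rw [hu]; linarith
      calc ENNReal.ofReal (|g z - ⨍ w in B, g w| ^ p' / ‖z - x‖ ^ a)
          ≤ ENNReal.ofReal (((2:ℝ)^p' * (u + A ^ p')) / ‖z - x‖ ^ a) := by
            refine ENNReal.ofReal_le_ofReal ?_
            gcongr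
          _ = ENNReal.ofReal ((2:ℝ)^p' * (u / ‖z - x‖ ^ a)
                + (2:ℝ)^p' * (A ^ p' * (‖z - x‖ ^ a)⁻¹)) := by
            congr 1
            field_simp
          _ = ENNReal.ofReal ((2:ℝ)^p') * ENNReal.ofReal (u / ‖z - x‖ ^ a)
              + (ENNReal.ofReal ((2:ℝ)^p') * ENNReal.ofReal (A ^ p')) *
                ENNReal.ofReal (‖z - x‖ ^ (-a)) := by
            rw [ENNReal.ofReal_add (by positivity) (by positivity),
              ENNReal.ofReal_mul (by positivity), ENNReal.ofReal_mul (by positivity),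
              ENNReal.ofReal_mul hv0, Real.rpow_neg (norm_nonneg _), mul_assoc]
    -- split the integral
    have haef1 : AEMeasurable
        (fun z => ENNReal.ofReal ((2:ℝ)^p') *
          ENNReal.ofReal (|g z - g x| ^ p' / ‖z - x‖ ^ a))
        (volume.restrict (ball x (2*t))ᶜ) := by
      refine AEMeasurable.const_mul ?_ _
      refine ENNReal.measurable_ofReal.comp_aemeasurable ?_
      refine AEMeasurable.div ?_ ?_
      · exact (measurable_abs.comp_aemeasurable
          ((hg.aestronglyMeasurable.aemeasurable.restrict).sub aemeasurable_const)).pow_const p'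
      · have : Continuous (fun z : EuclideanSpace ℝ (Fin n) => ‖z - x‖ ^ a) := by
          apply Continuous.rpow_const ((continuous_id.sub continuous_const).norm)
          exact fun z => Or.inr ha0
        exact this.measurable.aemeasurable
    have hsplit : (∫⁻ z in (ball x (2*t))ᶜ,
          ENNReal.ofReal (|g z - ⨍ w in B, g w| ^ p' / ‖z - x‖ ^ a))
        ≤ ENNReal.ofReal ((2:ℝ)^p') * I
          + (ENNReal.ofReal ((2:ℝ)^p') * ENNReal.ofReal (A ^ p')) * K := by
      calc (∫⁻ z in (ball x (2*t))ᶜ,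
            ENNReal.ofReal (|g z - ⨍ w in B, g w| ^ p' / ‖z - x‖ ^ a))
          ≤ ∫⁻ z in (ball x (2*t))ᶜ,
              (ENNReal.ofReal ((2:ℝ)^p') * ENNReal.ofReal (|g z - g x| ^ p' / ‖z - x‖ ^ a)
              + (ENNReal.ofReal ((2:ℝ)^p') * ENNReal.ofReal (A ^ p')) *
                ENNReal.ofReal (‖z - x‖ ^ (-a))) :=
            setLIntegral_mono' measurableSet_ball.compl hpt
        _ = (∫⁻ z in (ball x (2*t))ᶜ,
              ENNReal.ofReal ((2:ℝ)^p') * ENNReal.ofReal (|g z - g x| ^ p' / ‖z - x‖ ^ a))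
            + ∫⁻ z in (ball x (2*t))ᶜ,
              (ENNReal.ofReal ((2:ℝ)^p') * ENNReal.ofReal (A ^ p')) *
                ENNReal.ofReal (‖z - x‖ ^ (-a)) := lintegral_add_left' haef1 _
        _ ≤ ENNReal.ofReal ((2:ℝ)^p') * I
            + (ENNReal.ofReal ((2:ℝ)^p') * ENNReal.ofReal (A ^ p')) * K := by
            refine add_le_add ?_ ?_
            · rw [lintegral_const_mul' _ _ ENNReal.ofReal_ne_top]
              exact mul_le_mul_right (setLIntegral_le_lintegral _ _) _
            · rw [lintegral_const_mul' _ _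
                (ENNReal.mul_ne_top ENNReal.ofReal_ne_top ENNReal.ofReal_ne_top)]
    -- bound for the average term
    have havg : ENNReal.ofReal (A ^ p') ≤ m⁻¹ *
        ∫⁻ w in B, ENNReal.ofReal (|g w - g x| ^ p') := avg_bound10 hp' hg x ht
    have hJ : (∫⁻ w in B, ENNReal.ofReal (|g w - g x| ^ p'))
        ≤ ENNReal.ofReal (t ^ a) * I := by
      calc (∫⁻ w in B, ENNReal.ofReal (|g w - g x| ^ p'))
          ≤ ∫⁻ w in B, ENNReal.ofReal (t ^ a) *
              ENNReal.ofReal (|g w - g x| ^ p' / ‖w - x‖ ^ a) := by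
            refine setLIntegral_mono' measurableSet_ball fun w hw => ?_
            rw [← ENNReal.ofReal_mul (by positivity)]
            refine ENNReal.ofReal_le_ofReal ?_
            rcases eq_or_ne w x with hwx | hwx
            · subst hwx
              rw [sub_self, abs_zero, Real.zero_rpow hp'0.ne']
              positivity
            · have hwn : (0:ℝ) < ‖w - x‖ := by
                rw [norm_pos_iff, sub_ne_zero]; exact hwx
              have hwt : ‖w - x‖ ≤ t := by
                rw [← dist_eq_norm]; exact (mem_ball.1 hw).le
              have hle : ‖w - x‖ ^ a ≤ t ^ a := Real.rpow_le_rpow hwn.le hwt ha0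
              have hta : (0:ℝ) < t ^ a := Real.rpow_pos_of_pos ht a
              have hwa : (0:ℝ) < ‖w - x‖ ^ a := Real.rpow_pos_of_pos hwn a
              calc |g w - g x| ^ p' = |g w - g x| ^ p' / t ^ a * t ^ a :=
                    (div_mul_cancel₀ _ hta.ne').symm
                _ ≤ |g w - g x| ^ p' / ‖w - x‖ ^ a * t ^ a := by
                    refine mul_le_mul_of_nonneg_right ?_ hta.le
                    exact div_le_div_of_nonneg_left (Real.rpow_nonneg (abs_nonneg _) _) hwa hle
                _ = t ^ a * (|g w - g x| ^ p' / ‖w - x‖ ^ a) := mul_comm _ _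
        _ = ENNReal.ofReal (t ^ a) *
              ∫⁻ w in B, ENNReal.ofReal (|g w - g x| ^ p' / ‖w - x‖ ^ a) :=
            lintegral_const_mul' _ _ ENNReal.ofReal_ne_top
        _ ≤ ENNReal.ofReal (t ^ a) * I :=
            mul_le_mul_right (setLIntegral_le_lintegral _ _) _
    -- tail bound
    have htail : K ≤ V * D * ENNReal.ofReal (t ^ ((n:ℝ) - a)) := by
      have := tail_bound10 hn0 hna ht x
      rw [show a - (n:ℝ) = s * p' by rw [ha]; ring] at this
      calc K ≤ V * ENNReal.ofReal ((2:ℝ) ^ (n:ℝ)) *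
            (1 - ENNReal.ofReal ((2:ℝ) ^ (-(s * p'))))⁻¹ *
            ENNReal.ofReal (t ^ ((n:ℝ) - a)) := this
        _ = V * D * ENNReal.ofReal (t ^ ((n:ℝ) - a)) := by rw [hD]; ring
    -- the measure of the ball
    have hmeq : m = et ^ (n:ℝ) * V := by
      rw [hm, hB, Measure.addHaar_ball volume x ht.le, finrank_euclideanSpace_fin,
        ← Real.rpow_natCast t n, hofReal_t]
    have hetn0 : et ^ (n:ℝ) ≠ 0 := by
      simp [ENNReal.rpow_eq_zero_iff, het0, hettop]
    have hetntop : et ^ (n:ℝ) ≠ ⊤ := ENNReal.rpow_ne_top_of_nonneg (by positivity) hettop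
    have hminv : m⁻¹ = (et ^ (n:ℝ))⁻¹ * V⁻¹ := by
      rw [hmeq, ENNReal.mul_inv (Or.inl hetn0) (Or.inl hetntop)]
    -- scalar cancellation
    have hscal : m⁻¹ * ENNReal.ofReal (t ^ a) * (V * ENNReal.ofReal (t ^ ((n:ℝ) - a))) = 1 := by
      rw [hminv, hofReal_t, hofReal_t]
      rw [show (et ^ (n:ℝ))⁻¹ = et ^ (-(n:ℝ)) by rw [ENNReal.rpow_neg]]
      calc et ^ (-(n:ℝ)) * V⁻¹ * et ^ a * (V * et ^ ((n:ℝ) - a))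
          = (V⁻¹ * V) * (et ^ (-(n:ℝ)) * et ^ a * et ^ ((n:ℝ) - a)) := by ring
        _ = 1 := by
            rw [ENNReal.inv_mul_cancel hV0 hVtop, ← ENNReal.rpow_add _ _ het0 hettop,
              ← ENNReal.rpow_add _ _ het0 hettop, one_mul,
              show -(n:ℝ) + a + ((n:ℝ) - a) = 0 by ring, ENNReal.rpow_zero]
    -- combine the second term
    have hterm2 : ENNReal.ofReal (A ^ p') * K ≤ D * I := by
      calc ENNReal.ofReal (A ^ p') * K
          ≤ (m⁻¹ * (ENNReal.ofReal (t ^ a) * I)) * (V * D * ENNReal.ofReal (t ^ ((n:ℝ) - a))) :=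
            mul_le_mul' (havg.trans (mul_le_mul_right hJ _)) htail
        _ = (m⁻¹ * ENNReal.ofReal (t ^ a) * (V * ENNReal.ofReal (t ^ ((n:ℝ) - a)))) * (D * I) := by
            ring
        _ = D * I := by rw [hscal, one_mul]
    -- total bound
    have htotal : (∫⁻ z in (ball x (2*t))ᶜ,
          ENNReal.ofReal (|g z - ⨍ w in B, g w| ^ p' / ‖z - x‖ ^ a)) ≤ C₀ * I := by
      calc (∫⁻ z in (ball x (2*t))ᶜ,
            ENNReal.ofReal (|g z - ⨍ w in B, g w| ^ p' / ‖z - x‖ ^ a))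
          ≤ ENNReal.ofReal ((2:ℝ)^p') * I
            + (ENNReal.ofReal ((2:ℝ)^p') * ENNReal.ofReal (A ^ p')) * K := hsplit
        _ ≤ ENNReal.ofReal ((2:ℝ)^p') * I + ENNReal.ofReal ((2:ℝ)^p') * (D * I) := by
            refine add_le_add_right ?_ _
            rw [mul_assoc]
            exact mul_le_mul_right hterm2 _
        _ = C₀ * I := by rw [hC₀]; ring
    calc (∫⁻ z in (ball x (2*t))ᶜ,
          ENNReal.ofReal (|g z - ⨍ w in B, g w| ^ p' / ‖z - x‖ ^ a)) ^ (1/p')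
        ≤ (C₀ * I) ^ (1/p') := ENNReal.rpow_le_rpow htotal (by positivity)
      _ = C₀ ^ (1/p') * I ^ (1/p') := ENNReal.mul_rpow_of_nonneg _ _ (by positivity)
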